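/- Let G be a finite group acting faithfully and transitively on a finite set Ω with point stabilizer G_ω. (a) If A ∈ L(G_ω,G) is core-complementary, then A is permutable with every B ∈ L(G_ω,G), i.e. AB = BA as subsets of G. (b) If A, B ∈ L(G_ω,G) are both core-complementary, then the set AB is a subgroup of G which is again core-complementary. -/

import Mathlib

open Pointwise

/-- A subgroup `A` with `G_ω ≤ A ≤ G` is core-complementary if
`A = G_ω · core_G(A)` as subsets of `G`. -/
def IsCoreComplementary {G Ω : Type*} [Group G] [MulAction G Ω] (ω : Ω)
    (A : Subgroup G) : Prop :=
  (A : Set G) = (MulAction.stabilizer G ω : Set G) * (A.normalCore : Set G)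

private lemma mul_subset_of_le {G : Type*} [Group G] {H K C : Subgroup G}
    (h1 : H ≤ C) (h2 : K ≤ C) : (H : Set G) * (K : Set G) ⊆ (C : Set G) := by
  rintro x ⟨a, ha, b, hb, rfl⟩
  exact C.mul_mem (h1 ha) (h2 hb)

private lemma cc_mul_eq_right {G : Type*} [Group G] {H B : Subgroup G} (h : H ≤ B) :
    (H : Set G) * (B : Set G) = (B : Set G) := by
  apply Set.Subset.antisymm (mul_subset_of_le h le_rfl)
  intro x hx
  exact ⟨1, H.one_mem, x, hx, one_mul x⟩

private lemma cc_mul_eq_left {G : Type*} [Group G] {H B : Subgroup G} (h : H ≤ B) :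
    (B : Set G) * (H : Set G) = (B : Set G) := by
  apply Set.Subset.antisymm (mul_subset_of_le le_rfl h)
  intro x hx
  exact ⟨x, hx, 1, H.one_mem, mul_one x⟩

private lemma key_mul {G : Type*} [Group G] {H A B : Subgroup G}
    (hB : H ≤ B) (hA : (A : Set G) = (H : Set G) * (A.normalCore : Set G)) :
    (A : Set G) * (B : Set G) = (B : Set G) * (A.normalCore : Set G) := by
  rw [hA, mul_assoc, ← Subgroup.normal_mul, sup_comm, Subgroup.mul_normal,
    ← mul_assoc, cc_mul_eq_right hB]

/-- Let `G` act faithfully and transitively on a finite set `Ω` with point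
stabilizer `G_ω`. (a) If `A ∈ L(G_ω, G)` is core-complementary, then `A` is permutable
with every `B ∈ L(G_ω, G)`, i.e. `AB = BA` as subsets of `G`. (b) If `A, B ∈ L(G_ω, G)`
are both core-complementary, then the set `AB` is a subgroup of `G` which is again
core-complementary. -/
theorem core_complementary_permutable {G Ω : Type*} [Group G] [Fintype Ω]
    [MulAction G Ω] [FaithfulSMul G Ω] (htrans : MulAction.IsPretransitive G Ω)
    (ω : Ω) :
    (∀ A B : Subgroup G, MulAction.stabilizer G ω ≤ A → MulAction.stabilizer G ω ≤ B →
      IsCoreComplementary ω A →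
      (A : Set G) * (B : Set G) = (B : Set G) * (A : Set G)) ∧
    (∀ A B : Subgroup G, MulAction.stabilizer G ω ≤ A → MulAction.stabilizer G ω ≤ B →
      IsCoreComplementary ω A → IsCoreComplementary ω B →
      ∃ C : Subgroup G, (C : Set G) = (A : Set G) * (B : Set G) ∧
        IsCoreComplementary ω C) := by
  set H := MulAction.stabilizer G ω with hH
  constructor
  · intro A B hHA hHB hA
    rw [key_mul hHB hA]
    rw [IsCoreComplementary, ← hH] at hA
    rw [hA, ← mul_assoc, cc_mul_eq_left hHB]
  · intro A B hHA hHB hA hB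
    rw [IsCoreComplementary, ← hH] at hA hB
    refine ⟨B ⊔ A.normalCore, ?_, ?_⟩
    · rw [Subgroup.mul_normal, key_mul hHB hA]
    · rw [IsCoreComplementary, ← hH]
      have hNle : B.normalCore ⊔ A.normalCore ≤ (B ⊔ A.normalCore).normalCore := by
        rw [Subgroup.normal_le_normalCore]
        exact sup_le ((B.normalCore_le).trans le_sup_left) le_sup_right
      apply Set.Subset.antisymm
      · calc ((B ⊔ A.normalCore : Subgroup G) : Set G)
            = (B : Set G) * (A.normalCore : Set G) := Subgroup.mul_normal _ _
          _ = (H : Set G) * (B.normalCore : Set G) * (A.normalCore : Set G) := by rw [← hB]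
          _ = (H : Set G) * ((B.normalCore ⊔ A.normalCore : Subgroup G) : Set G) := by
              rw [mul_assoc, Subgroup.mul_normal]
          _ ⊆ (H : Set G) * ((B ⊔ A.normalCore).normalCore : Set G) := by
              apply Set.mul_subset_mul_left
              exact SetLike.coe_subset_coe.mpr hNle
      · exact mul_subset_of_le (hHB.trans le_sup_left) (Subgroup.normalCore_le _)
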